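/- Let v, w : ℝ⁶ → ℝ be continuously differentiable functions of (t,x,y,z,s,r) with v ≠ w everywhere, satisfying the (5+1)-dimensional diagonal system: v_t + w v_x + (v_y + w_y)/(w−v) + (w v_z + v w_z)/(w−v) + (w² v_s + v² w_s)/(w−v) + (v w² v_r + v³ w_r)/(w−v) = 0 and w_t + v w_x + (v_y + w_y)/(v−w) + (w v_z + v w_z)/(v−w) + (w² v_s + v² w_s)/(v−w) + (w³ v_r + w v² w_r)/(v−w) = 0. Then the functions V = v + w and W = v w satisfy V_t + W_x + W V_r − V W_r = 0 and W_t + V W_x − W V_x + V_y + W_z + V W_s − W V_s = 0. -/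

import Mathlib

/-- Partial derivative of `f : ℝⁿ → ℝ` in the `i`-th coordinate direction. -/
noncomputable def pd {n : ℕ} (i : Fin n) (f : (Fin n → ℝ) → ℝ) (x : Fin n → ℝ) : ℝ :=
  fderiv ℝ f x (Pi.single i 1)

lemma pd_add {n : ℕ} (i : Fin n) {v w : (Fin n → ℝ) → ℝ} {x : Fin n → ℝ}
    (hv : DifferentiableAt ℝ v x) (hw : DifferentiableAt ℝ w x) :
    pd i (fun y => v y + w y) x = pd i v x + pd i w x := by
  unfold pd; rw [fderiv_fun_add hv hw]; rfl

lemma pd_mul {n : ℕ} (i : Fin n) {v w : (Fin n → ℝ) → ℝ} {x : Fin n → ℝ}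
    (hv : DifferentiableAt ℝ v x) (hw : DifferentiableAt ℝ w x) :
    pd i (fun y => v y * w y) x = v x * pd i w x + w x * pd i v x := by
  unfold pd; rw [fderiv_fun_mul hv hw]; simp

/-- Coordinates on ℝ⁶ are `(t,x,y,z,s,r)` with indices `(0,1,2,3,4,5)`.
If C¹ functions `v, w` with `v ≠ w` everywhere solve the (5+1)-dimensional diagonal system,
then `V = v + w` and `W = v w` satisfy `V_t + W_x + W V_r − V W_r = 0` and
`W_t + V W_x − W V_x + V_y + W_z + V W_s − W V_s = 0`. -/
theorem stmt2 (v w : (Fin 6 → ℝ) → ℝ) (hv : ContDiff ℝ 1 v) (hw : ContDiff ℝ 1 w)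
    (hne : ∀ x, v x ≠ w x)
    (h1 : ∀ x, pd 0 v x + w x * pd 1 v x
        + (pd 2 v x + pd 2 w x) / (w x - v x)
        + (w x * pd 3 v x + v x * pd 3 w x) / (w x - v x)
        + ((w x) ^ 2 * pd 4 v x + (v x) ^ 2 * pd 4 w x) / (w x - v x)
        + (v x * (w x) ^ 2 * pd 5 v x + (v x) ^ 3 * pd 5 w x) / (w x - v x) = 0)
    (h2 : ∀ x, pd 0 w x + v x * pd 1 w x
        + (pd 2 v x + pd 2 w x) / (v x - w x)
        + (w x * pd 3 v x + v x * pd 3 w x) / (v x - w x)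
        + ((w x) ^ 2 * pd 4 v x + (v x) ^ 2 * pd 4 w x) / (v x - w x)
        + ((w x) ^ 3 * pd 5 v x + w x * (v x) ^ 2 * pd 5 w x) / (v x - w x) = 0) :
    (∀ x, pd 0 (fun y => v y + w y) x + pd 1 (fun y => v y * w y) x
        + (v x * w x) * pd 5 (fun y => v y + w y) x
        - (v x + w x) * pd 5 (fun y => v y * w y) x = 0) ∧
    (∀ x, pd 0 (fun y => v y * w y) x + (v x + w x) * pd 1 (fun y => v y * w y) x
        - (v x * w x) * pd 1 (fun y => v y + w y) x
        + pd 2 (fun y => v y + w y) x + pd 3 (fun y => v y * w y) x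
        + (v x + w x) * pd 4 (fun y => v y * w y) x
        - (v x * w x) * pd 4 (fun y => v y + w y) x = 0) := by
  have hvd : Differentiable ℝ v := hv.differentiable one_ne_zero
  have hwd : Differentiable ℝ w := hw.differentiable one_ne_zero
  constructor <;> intro x
  all_goals
    have hd : w x - v x ≠ 0 := sub_ne_zero.mpr (Ne.symm (hne x))
    have hd' : v x - w x ≠ 0 := sub_ne_zero.mpr (hne x)
    have e1 := h1 x
    have e2 := h2 x
    field_simp at e1 e2
    have A : ∀ i : Fin 6, pd i (fun y => v y + w y) x = pd i v x + pd i w x :=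
      fun i => pd_add i (hvd x) (hwd x)
    have M : ∀ i : Fin 6, pd i (fun y => v y * w y) x
        = v x * pd i w x + w x * pd i v x :=
      fun i => pd_mul i (hvd x) (hwd x)
    simp only [A, M]
    apply mul_left_cancel₀ hd
    rw [mul_zero]
  · linear_combination e1 - e2
  · linear_combination w x * e1 - v x * e2
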